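/- arXiv:1711.05650 — 4 statements merged into one kernel-verified Lean document; each statement's English description precedes it below -/
import Mathlib

section
/- Let W and Ŵ be independent Gamma-distributed random variables with shape parameters m and m̂ (positive integers) and scale parameters Ω and Ω̂ respectively. Then the probability density function of the product Z = W·Ŵ is f(x) = (2 x^{(m+m̂)/2 − 1}) / (Γ(m) Γ(m̂) (Ω Ω̂)^{(m+m̂)/2}) · K_{m−m̂}(√(4x/(Ω Ω̂))) for x > 0, where K_ν is the modified Bessel function of the second kind. -/
open MeasureTheory ProbabilityTheory Real Set
open scoped ENNReal

/-- Modified Bessel function of the second kind, via its integral representation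
`K_ν(x) = (1/2) ∫_0^∞ t^(ν-1) exp(-(x/2)(t + 1/t)) dt`. -/
noncomputable def besselK (ν x : ℝ) : ℝ :=
  (1 / 2) * ∫ t in Ioi (0 : ℝ), t ^ (ν - 1) * Real.exp (-(x / 2) * (t + 1 / t))

lemma aux_pow_le_exp (k : ℕ) {u : ℝ} (hu : 0 ≤ u) : u ^ k ≤ k.factorial * Real.exp u := by
  have h := Real.pow_div_factorial_le_exp u hu k
  rw [div_le_iff₀ (by positivity)] at h
  linarith [h]

lemma aux_meas (p a : ℝ) : Measurable (fun t : ℝ => t ^ p * Real.exp (-a * (t + 1 / t))) := by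
  fun_prop

lemma aux_besselK_integrable (p : ℝ) {a : ℝ} (ha : 0 < a) :
    IntegrableOn (fun t : ℝ => t ^ p * Real.exp (-a * (t + 1 / t))) (Ioi 0) := by
  obtain ⟨k, hk⟩ : ∃ k : ℕ, -1 < p + k := ⟨⌈-p⌉₊, by
    have := Nat.le_ceil (-p); linarith⟩
  have hint : IntegrableOn
      (fun t : ℝ => (k.factorial / a ^ k) * (t ^ (p + (k : ℝ)) * Real.exp (-a * t))) (Ioi 0) := by
    refine Integrable.const_mul ?_ _
    have h := integrableOn_rpow_mul_exp_neg_mul_rpow hk (zero_lt_one' ℝ) ha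
    refine h.congr_fun (fun t ht => ?_) measurableSet_Ioi
    simp only [Real.rpow_one]
  refine hint.mono' (aux_meas p a).aestronglyMeasurable ?_
  filter_upwards [ae_restrict_mem measurableSet_Ioi] with t ht
  have ht0 : (0:ℝ) < t := ht
  have h1 : Real.exp (-a * (t + 1/t)) = Real.exp (-a*t) * Real.exp (-(a/t)) := by
    rw [← Real.exp_add]; congr 1; field_simp; ring
  have h2 : Real.exp (-(a/t)) ≤ k.factorial * t ^ k / a ^ k := by
    have hb : Real.exp (-(a/t)) * (a/t)^k ≤ k.factorial := by
      calc Real.exp (-(a/t)) * (a/t)^k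
          ≤ Real.exp (-(a/t)) * (k.factorial * Real.exp (a/t)) := by
            gcongr
            exact aux_pow_le_exp k (le_of_lt (div_pos ha ht0))
        _ = k.factorial := by rw [← mul_assoc, mul_comm (Real.exp _), mul_assoc,
            ← Real.exp_add, neg_add_cancel, Real.exp_zero, mul_one]
    have h3 : Real.exp (-(a/t)) ≤ k.factorial / (a/t)^k :=
      (le_div_iff₀ (by positivity)).mpr hb
    calc Real.exp (-(a/t)) ≤ k.factorial / (a/t)^k := h3
      _ = k.factorial * t^k / a^k := by rw [div_pow]; field_simp
  calc ‖t ^ p * Real.exp (-a * (t + 1/t))‖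
      = t^p * (Real.exp (-a*t) * Real.exp (-(a/t))) := by
        rw [Real.norm_eq_abs, abs_of_nonneg (by positivity), h1]
    _ ≤ t^p * (Real.exp (-a*t) * (k.factorial * t^k / a^k)) := by
        gcongr
    _ = k.factorial / a^k * (t ^ (p + (k:ℝ)) * Real.exp (-a*t)) := by
        rw [Real.rpow_add ht0, Real.rpow_natCast]; ring

lemma aux_besselK_lintegral (ν : ℝ) {a : ℝ} (ha : 0 < a) :
    ∫⁻ t in Ioi (0 : ℝ), ENNReal.ofReal (t ^ (ν - 1) * Real.exp (-a * (t + 1 / t))) =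
      ENNReal.ofReal (2 * besselK ν (2 * a)) := by
  rw [← ofReal_integral_eq_lintegral_ofReal (aux_besselK_integrable _ ha)
      ((ae_restrict_iff' measurableSet_Ioi).2 (ae_of_all _ (fun t ht =>
        mul_nonneg (Real.rpow_nonneg (le_of_lt ht) _) (Real.exp_nonneg _))))]
  congr 1
  rw [besselK, show 2 * a / 2 = a by ring, ← mul_assoc]
  norm_num

lemma aux_lintegral_scale (G : ℝ → ℝ≥0∞) (hG : Measurable G) {c : ℝ} (hc : 0 < c) :
    ∫⁻ t, G (c * t) = ENNReal.ofReal c⁻¹ * ∫⁻ x, G x := by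
  rw [← lintegral_map hG (measurable_const_mul c), Real.map_volume_mul_left hc.ne',
    lintegral_smul_measure, abs_of_pos (inv_pos.mpr hc), smul_eq_mul]

lemma aux_lintegral_scale' (G : ℝ → ℝ≥0∞) (hG : Measurable G) {c : ℝ} (hc : 0 < c) :
    ∫⁻ x, G x = ENNReal.ofReal c * ∫⁻ t, G (c * t) := by
  rw [aux_lintegral_scale G hG hc, ← mul_assoc, ← ENNReal.ofReal_mul hc.le,
    mul_inv_cancel₀ hc.ne', ENNReal.ofReal_one, one_mul]

lemma aux_key_neg (m mh : ℕ) {Ω₁ Ω₂ : ℝ} {z : ℝ} (hz : z < 0) :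
    ∫⁻ x : ℝ, gammaPDF m (1/Ω₁) x * ENNReal.ofReal x⁻¹ * gammaPDF mh (1/Ω₂) (z / x) = 0 := by
  have h : ∀ x : ℝ, gammaPDF m (1/Ω₁) x * ENNReal.ofReal x⁻¹ * gammaPDF mh (1/Ω₂) (z/x) = 0 := by
    intro x
    rcases lt_trichotomy x 0 with hx | rfl | hx
    · rw [gammaPDF_of_neg hx, zero_mul, zero_mul]
    · simp
    · rw [gammaPDF_of_neg (div_neg_of_neg_of_pos hz hx), mul_zero]
  simp only [h, lintegral_zero]

lemma aux_key_pos (m mh : ℕ) (hm : 0 < m) (hmh : 0 < mh) {Ω₁ Ω₂ : ℝ}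
    (hΩ₁ : 0 < Ω₁) (hΩ₂ : 0 < Ω₂) {z : ℝ} (hz : 0 < z) :
    ∫⁻ x : ℝ, gammaPDF m (1/Ω₁) x * ENNReal.ofReal x⁻¹ * gammaPDF mh (1/Ω₂) (z / x) =
      ENNReal.ofReal (2 * z ^ (((m : ℝ) + mh) / 2 - 1) /
          ((Nat.factorial (m - 1)) * (Nat.factorial (mh - 1)) *
            (Ω₁ * Ω₂) ^ (((m : ℝ) + mh) / 2)) *
          besselK ((m : ℝ) - mh) (Real.sqrt (4 * z / (Ω₁ * Ω₂)))) := by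
  have hM : (0:ℝ) < m := Nat.cast_pos.2 hm
  set e : ℝ := ((m:ℝ) + mh) / 2 with hedef
  have hMh : (0:ℝ) < mh := Nat.cast_pos.2 hmh
  set ν : ℝ := (m:ℝ) - mh with hνdef
  set a : ℝ := Real.sqrt (z / (Ω₁ * Ω₂)) with hadef
  set c : ℝ := Real.sqrt (z * Ω₁ / Ω₂) with hcdef
  have hΩ : 0 < Ω₁ * Ω₂ := mul_pos hΩ₁ hΩ₂
  have ha0 : 0 < a := Real.sqrt_pos.2 (div_pos hz hΩ)
  have hc0 : 0 < c := Real.sqrt_pos.2 (div_pos (mul_pos hz hΩ₁) hΩ₂)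
  have hca : c = a * Ω₁ := by
    rw [hadef, hcdef, show z * Ω₁ / Ω₂ = z / (Ω₁ * Ω₂) * Ω₁ ^ 2 by field_simp,
      Real.sqrt_mul (div_pos hz hΩ).le, Real.sqrt_sq hΩ₁.le]
  have hac : a * c = z / Ω₂ := by
    rw [hadef, hcdef, ← Real.sqrt_mul (div_pos hz hΩ).le,
      show z / (Ω₁*Ω₂) * (z*Ω₁/Ω₂) = (z/Ω₂)^2 by field_simp,
      Real.sqrt_sq (div_pos hz hΩ₂).le]
  have hΓ₁ : Real.Gamma ((m:ℕ):ℝ) = (Nat.factorial (m-1) : ℝ) := by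
    rw [show ((m:ℕ):ℝ) = ((m - 1 : ℕ) : ℝ) + 1 by
      rw [Nat.cast_sub hm]; push_cast; ring]
    exact Real.Gamma_nat_eq_factorial (m-1)
  have hΓ₂ : Real.Gamma ((mh:ℕ):ℝ) = (Nat.factorial (mh-1) : ℝ) := by
    rw [show ((mh:ℕ):ℝ) = ((mh - 1 : ℕ) : ℝ) + 1 by
      rw [Nat.cast_sub hmh]; push_cast; ring]
    exact Real.Gamma_nat_eq_factorial (mh-1)
  have hΓ₁0 : (0:ℝ) < Real.Gamma m := Real.Gamma_pos_of_pos hM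
  have hΓ₂0 : (0:ℝ) < Real.Gamma mh := Real.Gamma_pos_of_pos hMh
  set φ : ℝ → ℝ := fun x => gammaPDFReal m (1/Ω₁) x * x⁻¹ * gammaPDFReal mh (1/Ω₂) (z/x)
    with hφdef
  have hφmeas : Measurable φ :=
    ((measurable_gammaPDFReal _ _).mul measurable_inv).mul
      ((measurable_gammaPDFReal _ _).comp (measurable_const.div measurable_id))
  set K : ℝ := (1/Ω₁)^((m:ℕ):ℝ) / Real.Gamma m * ((1/Ω₂)^((mh:ℕ):ℝ) / Real.Gamma mh)
      * c^(ν-1) * z^((mh:ℝ)-1) with hKdef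
  have hK0 : 0 ≤ K := by positivity
  -- pointwise identity
  have hstep : ∀ t ∈ Ioi (0:ℝ), φ (c*t) = K * (t^(ν-1) * Real.exp (-a*(t+1/t))) := by
    intro t ht
    have ht0 : (0:ℝ) < t := ht
    have hx : (0:ℝ) < c*t := mul_pos hc0 ht0
    have hzx : (0:ℝ) < z/(c*t) := div_pos hz hx
    have hz2 : z = a * c * Ω₂ := by rw [hac]; field_simp
    have e1 : (1/Ω₁) * (c*t) = a*t := by rw [hca]; field_simp
    have e2 : (1/Ω₂) * (z/(c*t)) = a * (1/t) := by
      rw [hz2]; field_simp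
    have eexp : Real.exp (-((1/Ω₁)*(c*t))) * Real.exp (-((1/Ω₂)*(z/(c*t))))
        = Real.exp (-a*(t+1/t)) := by
      rw [← Real.exp_add, e1, e2]; congr 1; ring
    have epow : (c*t)^(((m:ℕ):ℝ)-1) * (c*t)⁻¹ * (z/(c*t))^(((mh:ℕ):ℝ)-1)
        = c^(ν-1) * t^(ν-1) * z^(((mh:ℕ):ℝ)-1) := by
      rw [Real.div_rpow hz.le hx.le, ← Real.rpow_neg_one (c*t),
        ← Real.rpow_add hx, div_eq_mul_inv, ← Real.rpow_neg hx.le]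
      rw [show (c*t)^((m:ℝ)-1+-1) * (z^((mh:ℝ)-1) * (c*t)^(-((mh:ℝ)-1)))
            = (c*t)^((m:ℝ)-1+-1) * (c*t)^(-((mh:ℝ)-1)) * z^((mh:ℝ)-1) from by ring,
        ← Real.rpow_add hx,
        show (m:ℝ) - 1 + -1 + -((mh:ℝ)-1) = ν - 1 by rw [hνdef]; ring,
        Real.mul_rpow hc0.le ht0.le]
    simp only [hφdef, gammaPDFReal, if_pos hx.le, if_pos hzx.le]
    calc (1/Ω₁)^((m:ℕ):ℝ) / Real.Gamma m * (c*t)^(((m:ℕ):ℝ)-1)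
            * Real.exp (-((1/Ω₁)*(c*t))) * (c*t)⁻¹
            * ((1/Ω₂)^((mh:ℕ):ℝ) / Real.Gamma mh * (z/(c*t))^(((mh:ℕ):ℝ)-1)
              * Real.exp (-((1/Ω₂)*(z/(c*t)))))
        = ((1/Ω₁)^((m:ℕ):ℝ) / Real.Gamma m) * ((1/Ω₂)^((mh:ℕ):ℝ) / Real.Gamma mh)
            * ((c*t)^(((m:ℕ):ℝ)-1) * (c*t)⁻¹ * (z/(c*t))^(((mh:ℕ):ℝ)-1))
            * (Real.exp (-((1/Ω₁)*(c*t))) * Real.exp (-((1/Ω₂)*(z/(c*t))))) := by ring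
      _ = K * (t^(ν-1) * Real.exp (-a*(t+1/t))) := by
          rw [epow, eexp, hKdef]; ring
  have hmeasψ : Measurable fun t : ℝ => ENNReal.ofReal (t^(ν-1) * Real.exp (-a*(t+1/t))) := by
    fun_prop
  set G : ℝ → ℝ≥0∞ := (Ioi (0:ℝ)).indicator (fun x => ENNReal.ofReal (φ x)) with hGdef
  have hGmeas : Measurable G := (hφmeas.ennreal_ofReal).indicator measurableSet_Ioi
  have hpdf1nn : ∀ x, 0 ≤ gammaPDFReal m (1/Ω₁) x :=
    gammaPDFReal_nonneg hM (by positivity)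
  have step1 : ∀ x : ℝ, gammaPDF m (1/Ω₁) x * ENNReal.ofReal x⁻¹
      * gammaPDF mh (1/Ω₂) (z/x) = G x := by
    intro x
    rcases lt_trichotomy x 0 with hx | rfl | hx
    · rw [gammaPDF_of_neg hx, zero_mul, zero_mul, hGdef,
        indicator_of_notMem (by simp [hx.not_gt])]
    · rw [hGdef, indicator_of_notMem (by simp)]
      simp
    · rw [hGdef, indicator_of_mem (mem_Ioi.2 hx)]
      simp only [gammaPDF, hφdef]
      rw [← ENNReal.ofReal_mul (hpdf1nn x),
        ← ENNReal.ofReal_mul (mul_nonneg (hpdf1nn x) (inv_nonneg.2 hx.le))]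
  -- the Bessel argument
  have hB : Real.sqrt (4*z/(Ω₁*Ω₂)) = 2*a := by
    rw [hadef, show 4*z/(Ω₁*Ω₂) = 2^2*(z/(Ω₁*Ω₂)) by ring,
      Real.sqrt_mul (by positivity) _, Real.sqrt_sq (by norm_num : (0:ℝ) ≤ 2)]
  -- power bookkeeping
  have hcc : c * c^(ν-1) = c^ν := by
    have h := (Real.rpow_add hc0 1 (ν-1)).symm
    rw [Real.rpow_one] at h
    rw [h, show (1:ℝ)+(ν-1) = ν by ring]
  have hcν : c^ν = z^(ν/2) * Ω₁^(ν/2) / Ω₂^(ν/2) := by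
    rw [hcdef, Real.sqrt_eq_rpow, ← Real.rpow_mul (by positivity : (0:ℝ) ≤ z*Ω₁/Ω₂),
      show (1/2)*ν = ν/2 by ring,
      Real.div_rpow (by positivity) hΩ₂.le, Real.mul_rpow hz.le hΩ₁.le]
  have hO1 : Ω₁^(ν/2) * (Ω₁^((m:ℝ)))⁻¹ = (Ω₁^e)⁻¹ := by
    rw [← Real.rpow_neg hΩ₁.le, ← Real.rpow_add hΩ₁,
      show ν/2 + -((m:ℝ)) = -e by rw [hνdef, hedef]; ring, Real.rpow_neg hΩ₁.le]
  have hO2 : (Ω₂^(ν/2))⁻¹ * (Ω₂^((mh:ℝ)))⁻¹ = (Ω₂^e)⁻¹ := by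
    rw [← Real.rpow_neg hΩ₂.le, ← Real.rpow_neg hΩ₂.le, ← Real.rpow_add hΩ₂,
      show -(ν/2) + -((mh:ℝ)) = -e by rw [hνdef, hedef]; ring, Real.rpow_neg hΩ₂.le]
  have hzz : z^(ν/2) * z^((mh:ℝ)-1) = z^(e-1) := by
    rw [← Real.rpow_add hz, show ν/2 + ((mh:ℝ)-1) = e-1 by rw [hνdef, hedef]; ring]
  have h2 : c * K * 2 = 2 * z^(e-1) / (Real.Gamma m * Real.Gamma mh * ((Ω₁*Ω₂)^e)) := by
    calc c * K * 2
        = (c * c^(ν-1)) * ((1/Ω₁)^((m:ℝ)) * (1/Ω₂)^((mh:ℝ)) * z^((mh:ℝ)-1)) * 2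
            / (Real.Gamma m * Real.Gamma mh) := by
          rw [hKdef]; ring
      _ = (z^(ν/2) * Ω₁^(ν/2) / Ω₂^(ν/2))
            * ((Ω₁^((m:ℝ)))⁻¹ * (Ω₂^((mh:ℝ)))⁻¹ * z^((mh:ℝ)-1)) * 2
            / (Real.Gamma m * Real.Gamma mh) := by
          rw [hcc, hcν, one_div, one_div, Real.inv_rpow hΩ₁.le, Real.inv_rpow hΩ₂.le]
      _ = (z^(ν/2) * z^((mh:ℝ)-1)) * (Ω₁^(ν/2) * (Ω₁^((m:ℝ)))⁻¹)
            * ((Ω₂^(ν/2))⁻¹ * (Ω₂^((mh:ℝ)))⁻¹) * 2 / (Real.Gamma m * Real.Gamma mh) := by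
          ring
      _ = z^(e-1) * (Ω₁^e)⁻¹ * (Ω₂^e)⁻¹ * 2 / (Real.Gamma m * Real.Gamma mh) := by
          rw [hzz, hO1, hO2]
      _ = 2 * z^(e-1) / (Real.Gamma m * Real.Gamma mh * ((Ω₁*Ω₂)^e)) := by
          rw [Real.mul_rpow hΩ₁.le hΩ₂.le]; ring
  have hfinal : c * (K * (2 * besselK ν (2*a)))
      = 2 * z ^ (e - 1) /
          ((Nat.factorial (m - 1)) * (Nat.factorial (mh - 1)) * (Ω₁ * Ω₂) ^ e) *
          besselK ν (Real.sqrt (4 * z / (Ω₁ * Ω₂))) := by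
    rw [hB, ← hΓ₁, ← hΓ₂]
    calc c * (K * (2 * besselK ν (2*a))) = (c * K * 2) * besselK ν (2*a) := by ring
      _ = _ := by rw [h2]
  calc ∫⁻ x : ℝ, gammaPDF m (1/Ω₁) x * ENNReal.ofReal x⁻¹ * gammaPDF mh (1/Ω₂) (z / x)
      = ∫⁻ x, G x := lintegral_congr step1
    _ = ENNReal.ofReal c * ∫⁻ t, G (c*t) := aux_lintegral_scale' G hGmeas hc0
    _ = ENNReal.ofReal c * ∫⁻ t, (Ioi (0:ℝ)).indicator
          (fun t => ENNReal.ofReal (φ (c*t))) t := by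
        congr 1
        refine lintegral_congr fun t => ?_
        rw [hGdef]
        by_cases ht : 0 < t
        · rw [indicator_of_mem (mem_Ioi.2 (mul_pos hc0 ht)), indicator_of_mem (mem_Ioi.2 ht)]
        · have h1 : c*t ∉ Ioi (0:ℝ) := by
            simp only [mem_Ioi]
            intro hct
            exact ht (by nlinarith)
          rw [indicator_of_notMem h1, indicator_of_notMem (by simpa using ht)]
    _ = ENNReal.ofReal c * ∫⁻ t in Ioi (0:ℝ), ENNReal.ofReal (φ (c*t)) := by
        rw [lintegral_indicator measurableSet_Ioi]
    _ = ENNReal.ofReal c * ∫⁻ t in Ioi (0:ℝ),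
          ENNReal.ofReal (K * (t^(ν-1) * Real.exp (-a*(t+1/t)))) := by
        congr 1
        refine setLIntegral_congr_fun measurableSet_Ioi (fun t ht => ?_)
        rw [hstep t ht]
    _ = ENNReal.ofReal c * (ENNReal.ofReal K
          * ∫⁻ t in Ioi (0:ℝ), ENNReal.ofReal (t^(ν-1) * Real.exp (-a*(t+1/t)))) := by
        congr 1
        simp_rw [ENNReal.ofReal_mul hK0]
        rw [lintegral_const_mul _ hmeasψ]
    _ = ENNReal.ofReal c * (ENNReal.ofReal K * ENNReal.ofReal (2 * besselK ν (2*a))) := by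
        rw [aux_besselK_lintegral ν ha0]
    _ = ENNReal.ofReal (2 * z ^ (e - 1) /
          ((Nat.factorial (m - 1)) * (Nat.factorial (mh - 1)) * (Ω₁ * Ω₂) ^ e) *
          besselK ν (Real.sqrt (4 * z / (Ω₁ * Ω₂)))) := by
        rw [← ENNReal.ofReal_mul hK0, ← ENNReal.ofReal_mul hc0.le, hfinal]

/-- PDF of the product of two independent Gamma random variables
`W ~ Gamma(m, scale Ω₁)` and `V ~ Gamma(mh, scale Ω₂)`. -/
theorem product_gamma_pdf
    {α : Type*} [MeasurableSpace α] (μ : Measure α) [IsProbabilityMeasure μ]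
    (W V : α → ℝ) (hWm : Measurable W) (hVm : Measurable V)
    (m mh : ℕ) (hm : 0 < m) (hmh : 0 < mh)
    (Ω₁ Ω₂ : ℝ) (hΩ₁ : 0 < Ω₁) (hΩ₂ : 0 < Ω₂)
    (hW : μ.map W = gammaMeasure m (1 / Ω₁))
    (hV : μ.map V = gammaMeasure mh (1 / Ω₂))
    (hindep : IndepFun W V μ) :
    μ.map (fun ω => W ω * V ω) =
      volume.withDensity (fun x => ENNReal.ofReal (if 0 < x then
        2 * x ^ (((m : ℝ) + mh) / 2 - 1) /
          ((Nat.factorial (m - 1)) * (Nat.factorial (mh - 1)) *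
            (Ω₁ * Ω₂) ^ (((m : ℝ) + mh) / 2)) *
          besselK ((m : ℝ) - mh) (Real.sqrt (4 * x / (Ω₁ * Ω₂)))
        else 0)) := by
  have hMul : Measurable fun p : ℝ × ℝ => p.1 * p.2 := measurable_fst.mul measurable_snd
  set f₁ : ℝ → ℝ≥0∞ := gammaPDF m (1/Ω₁) with hf1def
  set f₂ : ℝ → ℝ≥0∞ := gammaPDF mh (1/Ω₂) with hf2def
  have hf₁ : Measurable f₁ := (measurable_gammaPDFReal _ _).ennreal_ofReal
  have hf₂ : Measurable f₂ := (measurable_gammaPDFReal _ _).ennreal_ofReal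
  set D : ℝ → ℝ≥0∞ := fun x => ENNReal.ofReal (if 0 < x then
        2 * x ^ (((m : ℝ) + mh) / 2 - 1) /
          ((Nat.factorial (m - 1)) * (Nat.factorial (mh - 1)) *
            (Ω₁ * Ω₂) ^ (((m : ℝ) + mh) / 2)) *
          besselK ((m : ℝ) - mh) (Real.sqrt (4 * x / (Ω₁ * Ω₂)))
        else 0) with hDdef
  have hjoint : μ.map (fun ω => (W ω, V ω))
      = (gammaMeasure m (1/Ω₁)).prod (gammaMeasure mh (1/Ω₂)) := by
    rw [← hW, ← hV]
    exact (indepFun_iff_map_prod_eq_prod_map_map hWm.aemeasurable hVm.aemeasurable).mp hindep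
  have hmap : μ.map (fun ω => W ω * V ω)
      = ((volume.withDensity f₁).prod (volume.withDensity f₂)).map
          (fun p : ℝ×ℝ => p.1 * p.2) := by
    have : (gammaMeasure (m:ℝ) (1/Ω₁)) = volume.withDensity f₁ := rfl
    have h2 : (gammaMeasure (mh:ℝ) (1/Ω₂)) = volume.withDensity f₂ := rfl
    rw [← this, ← h2, ← hjoint, Measure.map_map hMul (hWm.prodMk hVm)]
    rfl
  rw [hmap]
  refine Measure.ext fun s hs => ?_
  rw [Measure.map_apply hMul hs, Measure.prod_apply (hMul hs)]
  -- inner measure as integral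
  have hT2 : ∀ x : ℝ, (volume.withDensity f₂) (Prod.mk x ⁻¹' ((fun p : ℝ×ℝ => p.1*p.2) ⁻¹' s))
      = ∫⁻ y, ((fun y => x*y) ⁻¹' s).indicator f₂ y := by
    intro x
    have hpre : Prod.mk x ⁻¹' ((fun p : ℝ×ℝ => p.1*p.2) ⁻¹' s) = (fun y => x*y) ⁻¹' s := rfl
    rw [hpre, withDensity_apply f₂ (hs.preimage (measurable_const_mul x)),
      ← lintegral_indicator (hs.preimage (measurable_const_mul x))]
  have hTmeas : Measurable fun x : ℝ =>
      (volume.withDensity f₂) (Prod.mk x ⁻¹' ((fun p : ℝ×ℝ => p.1*p.2) ⁻¹' s)) :=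
    measurable_measure_prodMk_left (hMul hs)
  rw [lintegral_withDensity_eq_lintegral_mul volume hf₁ hTmeas]
  -- pointwise rewrite of inner measure for x > 0 via scaling
  have hGx : ∀ x : ℝ, Measurable fun u : ℝ =>
      s.indicator (fun _ => (1:ℝ≥0∞)) u * f₂ (u/x) := fun x =>
    ((measurable_const.indicator hs).mul (hf₂.comp (measurable_id.div_const x)))
  have key1 : ∀ᵐ x : ℝ, f₁ x *
        (volume.withDensity f₂) (Prod.mk x ⁻¹' ((fun p : ℝ×ℝ => p.1*p.2) ⁻¹' s))
      = f₁ x * (ENNReal.ofReal x⁻¹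
          * ∫⁻ u, s.indicator (fun _ => (1:ℝ≥0∞)) u * f₂ (u/x)) := by
    have h0 : ∀ᵐ x : ℝ, x ≠ (0:ℝ) := by
      simp only [ae_iff, not_ne_iff, setOf_eq_eq_singleton]
      exact volume_singleton
    filter_upwards [h0] with x hx0
    rcases lt_or_gt_of_ne hx0 with hneg | hpos
    · rw [hf1def, gammaPDF_of_neg hneg, zero_mul, zero_mul]
    · rw [hT2 x]
      have hswap : ∀ y : ℝ, ((fun y => x*y) ⁻¹' s).indicator f₂ y
          = s.indicator (fun _ => (1:ℝ≥0∞)) (x*y) * f₂ ((x*y)/x) := by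
        intro y
        rw [mul_div_cancel_left₀ _ hpos.ne']
        by_cases hy : x*y ∈ s
        · rw [indicator_of_mem hy,
            indicator_of_mem (show y ∈ (fun y => x*y) ⁻¹' s from hy), one_mul]
        · rw [indicator_of_notMem hy,
            indicator_of_notMem (show y ∉ (fun y => x*y) ⁻¹' s from hy), zero_mul]
      simp_rw [hswap]
      rw [aux_lintegral_scale _ (hGx x) hpos]
  simp only [Pi.mul_apply]
  rw [lintegral_congr_ae key1]
  -- pull constants inside, swap integrals
  have key2 : ∀ x : ℝ, f₁ x * (ENNReal.ofReal x⁻¹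
        * ∫⁻ u, s.indicator (fun _ => (1:ℝ≥0∞)) u * f₂ (u/x))
      = ∫⁻ u, f₁ x * ENNReal.ofReal x⁻¹
          * (s.indicator (fun _ => (1:ℝ≥0∞)) u * f₂ (u/x)) := by
    intro x
    rw [lintegral_const_mul _ (hGx x), mul_assoc]
  simp_rw [key2]
  rw [lintegral_lintegral_swap]
  swap
  · refine Measurable.aemeasurable ?_
    refine Measurable.mul ?_ ?_
    · exact ((hf₁.comp measurable_fst).mul (measurable_fst.inv.ennreal_ofReal))
    · exact ((measurable_const.indicator hs).comp measurable_snd).mul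
        (hf₂.comp (measurable_snd.div measurable_fst))
  -- evaluate inner integral
  have key3 : ∀ᵐ u : ℝ, (∫⁻ x, f₁ x * ENNReal.ofReal x⁻¹
        * (s.indicator (fun _ => (1:ℝ≥0∞)) u * f₂ (u/x)))
      = s.indicator (fun _ => (1:ℝ≥0∞)) u * D u := by
    have h0 : ∀ᵐ u : ℝ, u ≠ (0:ℝ) := by
      simp only [ae_iff, not_ne_iff, setOf_eq_eq_singleton]
      exact volume_singleton
    filter_upwards [h0] with u hu0
    have hcomm : ∀ x : ℝ, f₁ x * ENNReal.ofReal x⁻¹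
          * (s.indicator (fun _ => (1:ℝ≥0∞)) u * f₂ (u/x))
        = s.indicator (fun _ => (1:ℝ≥0∞)) u * (f₁ x * ENNReal.ofReal x⁻¹ * f₂ (u/x)) := by
      intro x; ring
    simp_rw [hcomm]
    have hmeas : Measurable fun x : ℝ => f₁ x * ENNReal.ofReal x⁻¹ * f₂ (u/x) := by
      fun_prop
    rw [lintegral_const_mul _ hmeas]
    congr 1
    rcases lt_or_gt_of_ne hu0 with hneg | hpos
    · rw [aux_key_neg m mh hneg, hDdef]
      simp [not_lt_of_gt hneg, if_neg]
    · rw [aux_key_pos m mh hm hmh hΩ₁ hΩ₂ hpos, hDdef]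
      simp only [if_pos hpos]
  rw [lintegral_congr_ae key3]
  have key4 : ∀ u : ℝ, s.indicator (fun _ => (1:ℝ≥0∞)) u * D u = s.indicator D u := by
    intro u
    by_cases hu : u ∈ s
    · rw [indicator_of_mem hu, indicator_of_mem hu, one_mul]
    · rw [indicator_of_notMem hu, indicator_of_notMem hu, zero_mul]
  simp_rw [key4]
  rw [lintegral_indicator hs, withDensity_apply D hs]
end

section
/- For integers q ≥ 1 and p ≥ 0, the function Λ(t) = −Σ_{r=1}^{q} 2^{r−1} ((q−1)!/(q−r)!) t^{2(q−r)} t^{p+r} K_{p+r}(t) is an antiderivative of t ↦ t^{2q+p−1} K_p(t) on (0, ∞), where K_ν is the modified Bessel function of the second kind. -/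
open MeasureTheory Real Set
open Filter

lemma exp_neg_le (x : ℝ) (hx : 0 < x) (n : ℕ) : Real.exp (-x) ≤ n.factorial / x ^ n := by
  have h1 : x ^ n / n.factorial ≤ Real.exp x := by
    calc x ^ n / n.factorial ≤ ∑ i ∈ Finset.range (n + 1), x ^ i / i.factorial :=
          Finset.single_le_sum (f := fun i => x ^ i / i.factorial)
            (fun i _ => by positivity) (Finset.self_mem_range_succ n)
      _ ≤ Real.exp x := Real.sum_le_exp_of_nonneg hx.le (n + 1)
  have h2 : (0:ℝ) < x ^ n / n.factorial := by positivity
  rw [Real.exp_neg]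
  calc (Real.exp x)⁻¹ ≤ (x ^ n / n.factorial)⁻¹ := by
        apply inv_anti₀ h2 h1
    _ = n.factorial / x ^ n := by rw [inv_div]
  
lemma contOn_aux (ν c : ℝ) : ContinuousOn (fun s : ℝ => s ^ ν * Real.exp (-c * (s + 1/s))) (Ioi 0) := by
  intro s hs
  have hs0 : (s:ℝ) ≠ 0 := ne_of_gt hs
  apply ContinuousAt.continuousWithinAt
  have h1 : ContinuousAt (fun s : ℝ => s ^ ν) s := Real.continuousAt_rpow_const s ν (Or.inl hs0)
  have h2 : ContinuousAt (fun s : ℝ => -c * (s + 1/s)) s :=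
    continuousAt_const.mul (continuousAt_id.add (continuousAt_const.div continuousAt_id hs0))
  exact h1.mul (Real.continuous_exp.continuousAt.comp h2)

lemma integrableOn_aux (ν c : ℝ) (hc : 0 < c) :
    IntegrableOn (fun s : ℝ => s ^ ν * Real.exp (-c * (s + 1/s))) (Ioi 0) := by
  set f : ℝ → ℝ := fun s => s ^ ν * Real.exp (-c * (s + 1/s)) with hf
  have hpos : ∀ s : ℝ, 0 < s → 0 ≤ f s := fun s hs => by
    have := Real.rpow_nonneg hs.le ν
    positivity
  have h1 : IntegrableOn f (Ioc 0 1) := by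
    set n : ℕ := ⌈-ν⌉₊ with hn
    have hνn : 0 ≤ ν + n := by
      have := Nat.le_ceil (-ν); linarith
    refine Integrable.mono' (g := fun _ => (n.factorial : ℝ) / c ^ n)
      (integrableOn_const measure_Ioc_lt_top.ne) ?_ ?_
    · exact ((contOn_aux ν c).mono Ioc_subset_Ioi_self).aestronglyMeasurable measurableSet_Ioc
    · rw [ae_restrict_iff' measurableSet_Ioc]
      filter_upwards with s hs
      obtain ⟨h0s, hs1⟩ := hs
      have hb1 : Real.exp (-c * (s + 1/s)) ≤ Real.exp (-(c / s)) := by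
        apply Real.exp_le_exp.2
        rw [neg_mul, neg_le_neg_iff, div_le_iff₀ h0s]
        have hcs : c * (s + 1/s) * s = c * s^2 + c := by field_simp
        nlinarith [mul_pos hc (mul_pos h0s h0s)]
      have hb2 : Real.exp (-(c / s)) ≤ n.factorial / (c / s) ^ n :=
        exp_neg_le _ (div_pos hc h0s) n
      have hb3 : (n.factorial : ℝ) / (c / s) ^ n = (n.factorial / c ^ n) * s ^ (n:ℝ) := by
        rw [Real.rpow_natCast, div_pow]
        field_simp
      rw [Real.norm_eq_abs, abs_of_nonneg (hpos s h0s)]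
      calc f s ≤ s ^ ν * ((n.factorial / c ^ n) * s ^ (n:ℝ)) := by
            refine mul_le_mul_of_nonneg_left ?_ (Real.rpow_nonneg h0s.le ν)
            rw [← hb3]; exact hb1.trans hb2
        _ = (n.factorial / c ^ n) * s ^ (ν + n) := by
            rw [Real.rpow_add h0s]; ring
        _ ≤ (n.factorial / c ^ n) * 1 := by
            refine mul_le_mul_of_nonneg_left ?_ (by positivity)
            exact Real.rpow_le_one h0s.le hs1 hνn
        _ = n.factorial / c ^ n := mul_one _
  have h2 : IntegrableOn f (Ioi 1) := by
    apply integrable_of_isBigO_exp_neg (half_pos hc)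
      ((contOn_aux ν c).mono (fun s hs => mem_Ioi.2 (lt_of_lt_of_le zero_lt_one hs)))
    have htend : Tendsto (fun s : ℝ => s ^ ν * Real.exp (-(c/2) * s)) atTop (nhds 0) :=
      tendsto_rpow_mul_exp_neg_mul_atTop_nhds_zero ν (c/2) (half_pos hc)
    rw [Asymptotics.isBigO_iff]
    refine ⟨1, ?_⟩
    filter_upwards [htend.eventually_le_const zero_lt_one, eventually_gt_atTop 0] with s hsmall h0s
    rw [Real.norm_eq_abs, Real.norm_eq_abs, abs_of_nonneg (hpos s h0s),
      abs_of_nonneg (Real.exp_pos _).le, one_mul]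
    have hb1 : Real.exp (-c * (s + 1/s)) ≤ Real.exp (-c * s) := by
      apply Real.exp_le_exp.2
      have h1s : 0 ≤ 1/s := by positivity
      nlinarith
    have : -c * s = -(c/2) * s + -(c/2) * s := by ring
    calc f s ≤ s ^ ν * Real.exp (-c * s) :=
          mul_le_mul_of_nonneg_left hb1 (Real.rpow_nonneg h0s.le ν)
      _ = (s ^ ν * Real.exp (-(c/2) * s)) * Real.exp (-(c/2) * s) := by
          rw [this, Real.exp_add]; ring
      _ ≤ 1 * Real.exp (-(c/2) * s) :=
          mul_le_mul_of_nonneg_right hsmall (Real.exp_pos _).le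
      _ = Real.exp (-(c/2) * s) := one_mul _
  have := h1.union h2
  rwa [Ioc_union_Ioi_eq_Ioi zero_le_one] at this

lemma integrableOn_bessel (μ x : ℝ) (hx : 0 < x) :
    IntegrableOn (fun s : ℝ => s ^ μ * Real.exp (-(x/2) * (s + 1/s))) (Ioi 0) :=
  integrableOn_aux μ (x/2) (half_pos hx)

lemma integral_eq_two_besselK (μ x : ℝ) :
    ∫ s in Ioi (0:ℝ), s ^ (μ - 1) * Real.exp (-(x/2) * (s + 1/s)) = 2 * besselK μ x := by
  rw [besselK]; ring

lemma integral_eq_two_besselK' (μ x : ℝ) :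
    ∫ s in Ioi (0:ℝ), s ^ μ * Real.exp (-(x/2) * (s + 1/s)) = 2 * besselK (μ + 1) x := by
  rw [← integral_eq_two_besselK (μ + 1) x]
  norm_num

lemma hasDerivAt_besselK (ν x : ℝ) (hx : 0 < x) :
    HasDerivAt (fun y => besselK ν y)
      (-(1/2) * (besselK (ν - 1) x + besselK (ν + 1) x)) x := by
  set F : ℝ → ℝ → ℝ := fun y s => s ^ (ν - 1) * Real.exp (-(y/2) * (s + 1/s)) with hF
  set F' : ℝ → ℝ → ℝ := fun y s =>
    -(1/2) * ((s + 1/s) * (s ^ (ν - 1) * Real.exp (-(y/2) * (s + 1/s)))) with hF'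
  set bound : ℝ → ℝ := fun s =>
    (1/2) * (s ^ ν * Real.exp (-(x/4) * (s + 1/s)) + s ^ (ν - 2) * Real.exp (-(x/4) * (s + 1/s)))
    with hbound
  have key : Integrable (F' x) (volume.restrict (Ioi 0)) ∧
      HasDerivAt (fun y => ∫ s in Ioi (0:ℝ), F y s) (∫ s in Ioi (0:ℝ), F' x s) x := by
    apply hasDerivAt_integral_of_dominated_loc_of_deriv_le (s := Metric.ball x (x/2)) (bound := bound) (Metric.ball_mem_nhds x (half_pos hx))
    · filter_upwards with y
      exact (contOn_aux (ν - 1) (y/2)).aestronglyMeasurable measurableSet_Ioi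
    · exact integrableOn_bessel (ν - 1) x hx
    · apply AEStronglyMeasurable.const_mul
      apply AEStronglyMeasurable.mul
      · apply ContinuousOn.aestronglyMeasurable _ measurableSet_Ioi
        intro s hs
        exact (continuousWithinAt_id.add
          (continuousWithinAt_const.div continuousWithinAt_id (ne_of_gt hs)))
      · exact (contOn_aux (ν - 1) (x/2)).aestronglyMeasurable measurableSet_Ioi
    · rw [ae_restrict_iff' measurableSet_Ioi]
      filter_upwards with s hs y hy
      have h0s : (0:ℝ) < s := hs
      have hss : 0 < s + 1/s := by positivity
      have hy2 : x/2 < y := by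
        rw [Metric.mem_ball, Real.dist_eq, abs_lt] at hy
        linarith [hy.1]
      have hexp : Real.exp (-(y/2) * (s + 1/s)) ≤ Real.exp (-(x/4) * (s + 1/s)) := by
        apply Real.exp_le_exp.2
        nlinarith
      have hsν : s ^ (ν - 1) * s = s ^ ν := by
        rw [← Real.rpow_add_one (ne_of_gt h0s)]; congr 1 <;> ring
      have hsν2 : s ^ (ν - 1) * (1/s) = s ^ (ν - 2) := by
        rw [one_div, ← Real.rpow_neg_one s, ← Real.rpow_add h0s]; congr 1 <;> ring
      rw [Real.norm_eq_abs, hF']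
      have h1 : |(-(1/2) * ((s + 1/s) * (s ^ (ν-1) * Real.exp (-(y/2) * (s + 1/s)))))|
          = (1/2) * ((s + 1/s) * (s ^ (ν-1) * Real.exp (-(y/2) * (s + 1/s)))) := by
        rw [abs_mul, abs_mul, abs_mul]
        rw [abs_of_nonneg hss.le, abs_of_nonneg (Real.rpow_nonneg h0s.le _),
          abs_of_nonneg (Real.exp_pos _).le]
        norm_num
      rw [h1, hbound]
      have expand : ∀ E : ℝ, 0 ≤ E → (s + 1/s) * (s ^ (ν-1) * E) = s ^ ν * E + s ^ (ν-2) * E := by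
        intro E hE
        rw [← hsν, ← hsν2]; ring
      rw [expand _ (Real.exp_pos _).le]
      have := Real.exp_pos (-(x/4) * (s + 1/s))
      have h2 : s ^ ν * Real.exp (-(y/2) * (s + 1/s)) ≤ s ^ ν * Real.exp (-(x/4) * (s + 1/s)) :=
        mul_le_mul_of_nonneg_left hexp (Real.rpow_nonneg h0s.le _)
      have h3 : s ^ (ν-2) * Real.exp (-(y/2) * (s + 1/s)) ≤ s ^ (ν-2) * Real.exp (-(x/4) * (s + 1/s)) :=
        mul_le_mul_of_nonneg_left hexp (Real.rpow_nonneg h0s.le _)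
      linarith
    · exact ((integrableOn_aux ν (x/4) (by linarith)).add
        (integrableOn_aux (ν - 2) (x/4) (by linarith))).const_mul (1/2)
    · rw [ae_restrict_iff' measurableSet_Ioi]
      filter_upwards with s hs y hy
      have h0s : (0:ℝ) < s := hs
      have hinner : HasDerivAt (fun y : ℝ => -(y/2) * (s + 1/s)) (-(1/2) * (s + 1/s)) y := by
        have := (((hasDerivAt_id y).div_const 2).neg).mul_const (s + 1/s)
        simpa using this
      have := (hinner.exp).const_mul (s ^ (ν - 1))
      refine this.congr_deriv (Eq.symm ?_)
      rw [hF']; ring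
  have hKint : besselK ν = fun y => (1/2) * ∫ s in Ioi (0:ℝ), F y s := by
    funext y; rw [besselK]
  have hmain := (key.2.const_mul (1/2 : ℝ))
  rw [← hKint] at hmain
  refine hmain.congr_deriv (Eq.symm ?_)
  have hsplit : ∀ s ∈ Ioi (0:ℝ), F' x s =
      -(1/2) * (s ^ ν * Real.exp (-(x/2) * (s + 1/s))) +
      -(1/2) * (s ^ (ν - 1 - 1) * Real.exp (-(x/2) * (s + 1/s))) := by
    intro s hs
    have h0s : (0:ℝ) < s := hs
    have hsν : s ^ (ν - 1) * s = s ^ ν := by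
      rw [← Real.rpow_add_one (ne_of_gt h0s)]; congr 1 <;> ring
    have hsν2 : s ^ (ν - 1) * (1/s) = s ^ (ν - 1 - 1) := by
      rw [one_div, ← Real.rpow_neg_one s, ← Real.rpow_add h0s]; congr 1 <;> ring
    rw [hF', ← hsν, ← hsν2]; ring
  rw [setIntegral_congr_fun measurableSet_Ioi hsplit,
    integral_add ((integrableOn_bessel ν x hx).const_mul _)
      ((integrableOn_bessel (ν - 1 - 1) x hx).const_mul _),
    integral_const_mul, integral_const_mul, integral_eq_two_besselK' ν x,
    integral_eq_two_besselK (ν - 1) x]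
  ring

lemma tendsto_aux_zero (ν c : ℝ) (hc : 0 < c) :
    Tendsto (fun s : ℝ => s ^ ν * Real.exp (-c * (s + 1/s))) (nhdsWithin 0 (Ioi 0)) (nhds 0) := by
  have base : Tendsto (fun u : ℝ => u ^ (-ν) * Real.exp (-c * u)) atTop (nhds 0) :=
    tendsto_rpow_mul_exp_neg_mul_atTop_nhds_zero (-ν) c hc
  have hinv : Tendsto (fun s : ℝ => s⁻¹) (nhdsWithin 0 (Ioi 0)) atTop := tendsto_inv_nhdsGT_zero
  have hcomp := base.comp hinv
  have hub : Tendsto (fun s : ℝ => s ^ ν * Real.exp (-c * (1/s))) (nhdsWithin 0 (Ioi 0)) (nhds 0) := by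
    apply hcomp.congr'
    filter_upwards [self_mem_nhdsWithin] with s hs
    have h0s : (0:ℝ) < s := hs
    have h1 : (s⁻¹) ^ (-ν) = s ^ ν := by
      rw [Real.rpow_neg (inv_nonneg.2 h0s.le), Real.inv_rpow h0s.le, inv_inv]
    show (fun u : ℝ => u ^ (-ν) * Real.exp (-c * u)) s⁻¹ = s ^ ν * Real.exp (-c * (1/s))
    simp only []
    rw [h1, one_div]
  have hnn : ∀ᶠ s in nhdsWithin 0 (Ioi (0:ℝ)), 0 ≤ s ^ ν * Real.exp (-c * (s + 1/s)) := by
    filter_upwards [self_mem_nhdsWithin] with s hs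
    have h0s : (0:ℝ) < s := hs
    positivity
  have hle : ∀ᶠ s in nhdsWithin 0 (Ioi (0:ℝ)),
      s ^ ν * Real.exp (-c * (s + 1/s)) ≤ s ^ ν * Real.exp (-c * (1/s)) := by
    filter_upwards [self_mem_nhdsWithin] with s hs
    have h0s : (0:ℝ) < s := hs
    refine mul_le_mul_of_nonneg_left ?_ (Real.rpow_nonneg h0s.le ν)
    apply Real.exp_le_exp.2
    have h1s : 0 < 1/s := by positivity
    nlinarith
  exact squeeze_zero' hnn hle hub

lemma tendsto_aux_top (ν c : ℝ) (hc : 0 < c) :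
    Tendsto (fun s : ℝ => s ^ ν * Real.exp (-c * (s + 1/s))) atTop (nhds 0) := by
  have base : Tendsto (fun s : ℝ => s ^ ν * Real.exp (-c * s)) atTop (nhds 0) :=
    tendsto_rpow_mul_exp_neg_mul_atTop_nhds_zero ν c hc
  have hnn : ∀ᶠ s in atTop, (0:ℝ) ≤ s ^ ν * Real.exp (-c * (s + 1/s)) := by
    filter_upwards [eventually_gt_atTop (0:ℝ)] with s h0s
    positivity
  have hle : ∀ᶠ s in atTop, s ^ ν * Real.exp (-c * (s + 1/s)) ≤ s ^ ν * Real.exp (-c * s) := by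
    filter_upwards [eventually_gt_atTop (0:ℝ)] with s h0s
    refine mul_le_mul_of_nonneg_left ?_ (Real.rpow_nonneg h0s.le ν)
    apply Real.exp_le_exp.2
    have h1s : 0 < 1/s := by positivity
    nlinarith
  exact squeeze_zero' hnn hle base

lemma besselK_recurrence (ν x : ℝ) (hx : 0 < x) :
    x * (besselK (ν + 1) x - besselK (ν - 1) x) = 2 * ν * besselK ν x := by
  set g : ℝ → ℝ := fun s => if s ≤ 0 then 0 else s ^ ν * Real.exp (-(x/2) * (s + 1/s)) with hg
  set g' : ℝ → ℝ := fun s =>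
    ν * (s ^ (ν - 1) * Real.exp (-(x/2) * (s + 1/s)))
      - (x/2) * (s ^ ν * Real.exp (-(x/2) * (s + 1/s)))
      + (x/2) * (s ^ (ν - 1 - 1) * Real.exp (-(x/2) * (s + 1/s))) with hg'
  have hg0 : g 0 = 0 := by rw [hg]; simp
  have hderiv : ∀ s ∈ Ioi (0:ℝ), HasDerivAt g (g' s) s := by
    intro s hs
    have h0s : (0:ℝ) < s := hs
    have heq : g =ᶠ[nhds s] fun u => u ^ ν * Real.exp (-(x/2) * (u + 1/u)) := by
      filter_upwards [eventually_gt_nhds h0s] with u hu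
      rw [hg]; simp [not_le.2 hu]
    have hpow : HasDerivAt (fun u : ℝ => u ^ ν) (ν * s ^ (ν - 1)) s :=
      Real.hasDerivAt_rpow_const (Or.inl (ne_of_gt h0s))
    have hin : HasDerivAt (fun u : ℝ => -(x/2) * (u + 1/u)) (-(x/2) * (1 + -(s^2)⁻¹)) s := by
      have h1 : HasDerivAt (fun u : ℝ => u + 1/u) (1 + -(s^2)⁻¹) s := by
        simpa [one_div, Pi.add_def] using (hasDerivAt_id s).add (hasDerivAt_inv (ne_of_gt h0s))
      exact h1.const_mul _
    have hExp := hin.exp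
    have hprod := hpow.mul hExp
    have hmain : HasDerivAt (fun u : ℝ => u ^ ν * Real.exp (-(x/2) * (u + 1/u))) (g' s) s := by
      refine hprod.congr_deriv (Eq.symm ?_)
      have hsν : s ^ (ν - 1) * s = s ^ ν := by
        rw [← Real.rpow_add_one (ne_of_gt h0s)]; congr 1; ring
      have hs2 : s ^ ν * (s^2)⁻¹ = s ^ (ν - 1 - 1) := by
        rw [← Real.rpow_two, ← Real.rpow_neg h0s.le, ← Real.rpow_add h0s]; congr 1; ring
      simp only [hg']
      rw [← hs2, ← hsν]
      ring
    exact hmain.congr_of_eventuallyEq heq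
  have hcont : ContinuousWithinAt g (Ici (0:ℝ)) 0 := by
    rw [ContinuousWithinAt, hg0, ← Set.Ioi_insert, nhdsWithin_insert, tendsto_sup]
    constructor
    · simpa [hg0] using tendsto_pure_nhds g 0
    · have := tendsto_aux_zero ν (x/2) (half_pos hx)
      apply this.congr'
      filter_upwards [self_mem_nhdsWithin] with s hs
      have h0s : (0:ℝ) < s := hs
      rw [hg]; simp [not_le.2 h0s]
  have htop : Tendsto g atTop (nhds 0) := by
    have := tendsto_aux_top ν (x/2) (half_pos hx)
    apply this.congr'
    filter_upwards [eventually_gt_atTop (0:ℝ)] with s h0s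
    rw [hg]; simp [not_le.2 h0s]
  have h1 : IntegrableOn (fun s : ℝ =>
      ν * (s ^ (ν - 1) * Real.exp (-(x/2) * (s + 1/s)))
        - (x/2) * (s ^ ν * Real.exp (-(x/2) * (s + 1/s)))) (Ioi 0) :=
    ((integrableOn_bessel (ν - 1) x hx).const_mul ν).sub
      ((integrableOn_bessel ν x hx).const_mul (x/2))
  have h2 : IntegrableOn (fun s : ℝ =>
      (x/2) * (s ^ (ν - 1 - 1) * Real.exp (-(x/2) * (s + 1/s)))) (Ioi 0) :=
    (integrableOn_bessel (ν - 1 - 1) x hx).const_mul (x/2)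
  have hint : IntegrableOn g' (Ioi 0) := h1.add h2
  have hFTC := integral_Ioi_of_hasDerivAt_of_tendsto hcont hderiv hint htop
  rw [hg0, sub_zero] at hFTC
  have hexpand : ∫ s in Ioi (0:ℝ), g' s =
      ν * (2 * besselK ν x) - (x/2) * (2 * besselK (ν + 1) x)
        + (x/2) * (2 * besselK (ν - 1) x) := by
    rw [hg']
    rw [integral_add h1 h2,
      integral_sub ((integrableOn_bessel (ν-1) x hx).const_mul ν)
        ((integrableOn_bessel ν x hx).const_mul (x/2)),
      integral_const_mul, integral_const_mul, integral_const_mul,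
      integral_eq_two_besselK ν x, integral_eq_two_besselK' ν x,
      integral_eq_two_besselK (ν - 1) x]
  rw [hexpand] at hFTC
  linarith

lemma hasDerivAt_pow_mul_besselK (ν x : ℝ) (hx : 0 < x) (n : ℕ) (hn : 1 ≤ n) :
    HasDerivAt (fun y => y ^ n * besselK ν y)
      (((n : ℝ) - ν) * x ^ (n - 1) * besselK ν x - x ^ n * besselK (ν - 1) x) x := by
  have hK := hasDerivAt_besselK ν x hx
  have hp : HasDerivAt (fun y : ℝ => y ^ n) ((n : ℝ) * x ^ (n - 1)) x := hasDerivAt_pow n x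
  have hprod := hp.mul hK
  have hrec := besselK_recurrence ν x hx
  refine hprod.congr_deriv (Eq.symm ?_)
  have hxn : x ^ n = x ^ (n - 1) * x := by
    rw [← pow_succ, Nat.sub_add_cancel hn]
  rw [hxn]
  linear_combination (x ^ (n - 1) / 2) * hrec

lemma telescope (A B : ℕ → ℝ) (q : ℕ) (hq : 1 ≤ q)
    (hAB : ∀ r, 1 ≤ r → r < q → A r = B (r + 1)) (hAq : A q = 0) :
    ∑ r ∈ Finset.Icc 1 q, (A r - B r) = -B 1 := by
  obtain ⟨n, rfl⟩ : ∃ n, q = n + 1 := ⟨q - 1, by omega⟩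
  rw [Finset.sum_sub_distrib]
  have e : ∀ m : ℕ, Finset.Icc 1 m = Finset.Ioc 0 m := fun m => by
    rw [← Finset.Icc_add_one_left_eq_Ioc, zero_add]
  have h1 : ∑ r ∈ Finset.Icc 1 (n + 1), A r = ∑ r ∈ Finset.Icc 1 n, A r := by
    rw [e, e, Finset.sum_Ioc_succ_top (by omega), hAq, add_zero]
  have h2 : ∑ r ∈ Finset.Icc 1 n, A r = ∑ r ∈ Finset.Icc 2 (n + 1), B r := by
    have hmap : Finset.Icc (2:ℕ) (n + 1) = (Finset.Icc 1 n).map (addRightEmbedding 1) := by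
      rw [Finset.map_add_right_Icc]
    rw [hmap, Finset.sum_map]
    refine Finset.sum_congr rfl fun r hr => ?_
    simp only [Finset.mem_Icc] at hr
    have : addRightEmbedding 1 r = r + 1 := rfl
    rw [this]
    exact hAB r hr.1 (by omega)
  have h3 : ∑ r ∈ Finset.Icc 1 (n + 1), B r = B 1 + ∑ r ∈ Finset.Icc 2 (n + 1), B r := by
    rw [Finset.Icc_eq_cons_Ioc (by omega), Finset.sum_cons, ← Finset.Icc_add_one_left_eq_Ioc]; rfl
  rw [h1, h2, h3]
  ring

/-- `Λ(t) = -∑_{r=1}^q 2^(r-1) ((q-1)!/(q-r)!) t^(2(q-r)) t^(p+r) K_{p+r}(t)` is an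
antiderivative of `t ↦ t^(2q+p-1) K_p(t)` on `(0,∞)`. -/
theorem antiderivative_bessel (q p : ℕ) (hq : 1 ≤ q) (t : ℝ) (ht : 0 < t) :
    HasDerivAt (fun t : ℝ =>
        -∑ r ∈ Finset.Icc 1 q,
          (2 : ℝ) ^ (r - 1) * ((Nat.factorial (q - 1)) / (Nat.factorial (q - r))) *
            t ^ (2 * (q - r)) * t ^ (p + r) * besselK (p + r) t)
      (t ^ (2 * q + p - 1) * besselK p t) t := by
  have hder : ∀ r ∈ Finset.Icc 1 q,
      HasDerivAt (fun u : ℝ =>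
          (2 : ℝ) ^ (r - 1) * ((Nat.factorial (q - 1)) / (Nat.factorial (q - r))) *
            u ^ (2 * (q - r)) * u ^ (p + r) * besselK (p + r) u)
        ((2 : ℝ) ^ (r - 1) * ((Nat.factorial (q - 1)) / (Nat.factorial (q - r))) *
            ((((2 * (q - r) + (p + r) : ℕ) : ℝ) - ((p : ℝ) + r)) *
              t ^ (2 * (q - r) + (p + r) - 1) * besselK ((p : ℝ) + r) t -
            t ^ (2 * (q - r) + (p + r)) * besselK ((p : ℝ) + r - 1) t)) t := by
    intro r hr
    simp only [Finset.mem_Icc] at hr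
    have hbase := (hasDerivAt_pow_mul_besselK ((p : ℝ) + r) t ht (2 * (q - r) + (p + r))
      (by omega)).const_mul
      ((2 : ℝ) ^ (r - 1) * ((Nat.factorial (q - 1) : ℝ) / (Nat.factorial (q - r) : ℝ)))
    have heq : (fun u : ℝ =>
        (2 : ℝ) ^ (r - 1) * ((Nat.factorial (q - 1)) / (Nat.factorial (q - r))) *
          (u ^ (2 * (q - r) + (p + r)) * besselK ((p : ℝ) + r) u)) =
        fun u : ℝ =>
        (2 : ℝ) ^ (r - 1) * ((Nat.factorial (q - 1)) / (Nat.factorial (q - r))) *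
          u ^ (2 * (q - r)) * u ^ (p + r) * besselK ((p : ℝ) + r) u := by
      funext u
      rw [pow_add]
      ring
    rw [heq] at hbase
    convert hbase using 1
  have hsum := (HasDerivAt.fun_sum hder).neg
  refine hsum.congr_deriv (Eq.symm ?_)
  set K : ℝ → ℝ := fun ν => besselK ν t with hK
  set A : ℕ → ℝ := fun r =>
    (2 : ℝ) ^ (r - 1) * ((Nat.factorial (q - 1)) / (Nat.factorial (q - r))) *
      ((((2 * (q - r) + (p + r) : ℕ) : ℝ) - ((p : ℝ) + r)) *
        t ^ (2 * (q - r) + (p + r) - 1) * besselK ((p : ℝ) + r) t) with hA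
  set B : ℕ → ℝ := fun r =>
    (2 : ℝ) ^ (r - 1) * ((Nat.factorial (q - 1)) / (Nat.factorial (q - r))) *
      (t ^ (2 * (q - r) + (p + r)) * besselK ((p : ℝ) + r - 1) t) with hB
  have hsplit : ∀ r ∈ Finset.Icc 1 q,
      (2 : ℝ) ^ (r - 1) * ((Nat.factorial (q - 1)) / (Nat.factorial (q - r))) *
          ((((2 * (q - r) + (p + r) : ℕ) : ℝ) - ((p : ℝ) + r)) *
            t ^ (2 * (q - r) + (p + r) - 1) * besselK ((p : ℝ) + r) t -
          t ^ (2 * (q - r) + (p + r)) * besselK ((p : ℝ) + r - 1) t) = A r - B r := by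
    intro r _
    simp only [hA, hB]
    ring
  rw [Finset.sum_congr rfl hsplit]
  have hAB : ∀ r, 1 ≤ r → r < q → A r = B (r + 1) := by
    intro r hr1 hrq
    simp only [hA, hB]
    have hidx : (p : ℝ) + ((r + 1 : ℕ) : ℝ) - 1 = (p : ℝ) + r := by push_cast; ring
    have hexp : 2 * (q - r) + (p + r) - 1 = 2 * (q - (r + 1)) + (p + (r + 1)) := by omega
    have hcast : ((2 * (q - r) + (p + r) : ℕ) : ℝ) - ((p : ℝ) + r) = 2 * ((q : ℝ) - r) := by
      rw [Nat.cast_add, Nat.cast_mul, Nat.cast_sub (by omega), Nat.cast_add]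
      push_cast
      ring
    have hfac : ((Nat.factorial (q - r) : ℕ) : ℝ) = ((q : ℝ) - r) * (Nat.factorial (q - (r + 1))) := by
      have h1 : q - r = (q - (r + 1)) + 1 := by omega
      rw [h1, Nat.factorial_succ]
      push_cast
      rw [Nat.cast_sub (show r + 1 ≤ q by omega)]
      push_cast
      ring
    have hpow2 : (2 : ℝ) ^ ((r + 1) - 1) = (2 : ℝ) ^ (r - 1) * 2 := by
      have h1 : (r + 1) - 1 = (r - 1) + 1 := by omega
      rw [h1, pow_succ]
    have hqr : (0:ℝ) < (q : ℝ) - r := by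
      have : (r : ℝ) < q := by exact_mod_cast hrq
      linarith
    rw [hexp, hcast, hidx, hpow2, hfac]
    have hne : ((Nat.factorial (q - (r + 1)) : ℕ) : ℝ) ≠ 0 :=
      Nat.cast_ne_zero.2 (Nat.factorial_ne_zero _)
    field_simp
  have hAq : A q = 0 := by
    simp only [hA]
    have h0 : ((2 * (q - q) + (p + q) : ℕ) : ℝ) - ((p : ℝ) + q) = 0 := by
      rw [Nat.sub_self]
      push_cast
      ring
    rw [h0]
    ring
  rw [telescope A B q hq hAB hAq]
  simp only [hB]
  have hexp1 : 2 * (q - 1) + (p + 1) = 2 * q + p - 1 := by omega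
  have hidx1 : (p : ℝ) + ((1 : ℕ) : ℝ) - 1 = (p : ℝ) := by push_cast; ring
  rw [hexp1, hidx1]
  have hone : ((Nat.factorial (q - 1) : ℕ) : ℝ) / ((Nat.factorial (q - 1) : ℕ) : ℝ) = 1 :=
    div_self (Nat.cast_ne_zero.2 (Nat.factorial_ne_zero _))
  rw [pow_zero, hone]
  ring
end

section
/- For integers q ≥ 1 and p ≥ 0, ∫_0^∞ t^{2q+p−1} K_p(t) dt = 2^{p+2q−2} (q−1)! (p+q−1)!, where K_p is the modified Bessel function of the second kind of integer order p. -/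
open MeasureTheory Real Set

private lemma one_div_rpow_neg {x : ℝ} (hx : 0 < x) (y : ℝ) : (1/x) ^ (-y) = x ^ y := by
  rw [one_div, Real.inv_rpow hx.le, ← Real.rpow_neg hx.le, neg_neg]

/-- Gaussian moment. -/
private lemma gaussian_moment (q' : ℕ) {w : ℝ} (hw : 0 < w) :
    ∫ t in Ioi (0:ℝ), t ^ (2*(q':ℝ)+1) * Real.exp (-(1/(4*w)) * t ^ (2:ℝ))
      = (4*w) ^ ((q':ℝ)+1) * (1/2) * Real.Gamma ((q':ℝ)+1) := by
  rw [integral_rpow_mul_exp_neg_mul_rpow two_pos (by linarith [Nat.cast_nonneg (α := ℝ) q'])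
    (by positivity)]
  rw [show -(2*(q':ℝ)+1+1)/2 = -((q':ℝ)+1) by ring, show (2*(q':ℝ)+1+1)/2 = (q':ℝ)+1 by ring,
    one_div_rpow_neg (by positivity)]

private lemma gaussian_moment_integrable (q' : ℕ) {w : ℝ} (hw : 0 < w) :
    IntegrableOn (fun t : ℝ => t ^ (2*(q':ℝ)+1) * Real.exp (-(1/(4*w)) * t ^ (2:ℝ))) (Ioi 0) :=
  integrableOn_rpow_mul_exp_neg_mul_rpow (by linarith [Nat.cast_nonneg (α := ℝ) q']) two_pos
    (by positivity)

/-- Substitution `s = (2/t) * w` in the Bessel integral. -/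
private lemma besselK_substituted (p : ℕ) {t : ℝ} (ht : 0 < t) :
    ∫ s in Ioi (0:ℝ), s ^ ((p:ℝ) - 1) * Real.exp (-(t/2) * (s + 1/s))
      = (2/t) * ((2/t) ^ ((p:ℝ)-1) * ∫ w in Ioi (0:ℝ),
          w ^ ((p:ℝ)-1) * Real.exp (-w) * Real.exp (-(1/(4*w)) * t ^ (2:ℝ))) := by
  have hb : (0:ℝ) < 2/t := by positivity
  have key := integral_comp_mul_left_Ioi
      (fun s => s ^ ((p:ℝ) - 1) * Real.exp (-(t/2) * (s + 1/s))) 0 hb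
  rw [mul_zero] at key
  have h1 : ∫ s in Ioi (0:ℝ), s ^ ((p:ℝ) - 1) * Real.exp (-(t/2) * (s + 1/s))
      = (2/t) * ∫ w in Ioi (0:ℝ),
          ((2/t)*w) ^ ((p:ℝ) - 1) * Real.exp (-(t/2) * ((2/t)*w + 1/((2/t)*w))) := by
    rw [key, smul_eq_mul, ← mul_assoc, mul_inv_cancel₀ hb.ne', one_mul]
  rw [h1]
  congr 1
  rw [← MeasureTheory.integral_const_mul ((2/t) ^ ((p:ℝ)-1))]
  refine setIntegral_congr_fun measurableSet_Ioi (fun w hw => ?_)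
  have hw : (0:ℝ) < w := hw
  rw [Real.mul_rpow hb.le hw.le]
  have harg : -(t/2) * ((2/t)*w + 1/((2/t)*w)) = -w + -(1/(4*w)) * t ^ (2:ℝ) := by
    rw [show (2:ℝ) = ((2:ℕ):ℝ) from by norm_cast, Real.rpow_natCast]
    field_simp
    ring
  rw [harg, Real.exp_add]
  ring

private lemma step1 (p q' : ℕ) {t : ℝ} (ht : 0 < t) :
    t ^ (2*q'+p+1) * besselK p t
      = 2 ^ ((p:ℝ)-1) * ∫ w in Ioi (0:ℝ),
          t ^ (2*(q':ℝ)+1) * (w ^ ((p:ℝ)-1) * Real.exp (-w) * Real.exp (-(1/(4*w)) * t ^ (2:ℝ))) := by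
  rw [besselK, besselK_substituted p ht, integral_const_mul]
  have hb : (0:ℝ) < 2/t := by positivity
  have e1 : (2/t) ^ ((p:ℝ)-1) = (2/t) ^ (p:ℕ) / (2/t) := by
    rw [Real.rpow_sub hb, Real.rpow_natCast, Real.rpow_one]
  have e2 : (2:ℝ) ^ ((p:ℝ)-1) = 2 ^ (p:ℕ) / 2 := by
    rw [Real.rpow_sub two_pos, Real.rpow_natCast, Real.rpow_one]
  have e3 : t ^ (2*(q':ℝ)+1) = t ^ (2*q'+1 : ℕ) := by
    rw [show 2*(q':ℝ)+1 = ((2*q'+1:ℕ):ℝ) by push_cast; ring, Real.rpow_natCast]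
  rw [e1, e2, e3]
  have ht' := ht.ne'
  field_simp
  ring_nf
  rw [mul_assoc (t * t ^ (q' * 2)) (t ^ p), ← mul_pow, mul_inv_cancel₀ ht', one_pow, mul_one]

private lemma F_integrable (p q' : ℕ) :
    Integrable (Function.uncurry fun t w : ℝ =>
      t ^ (2*(q':ℝ)+1) * (w ^ ((p:ℝ)-1) * Real.exp (-w) * Real.exp (-(1/(4*w)) * t ^ (2:ℝ))))
      ((volume.restrict (Ioi 0)).prod (volume.restrict (Ioi 0))) := by
  have hmeas : AEStronglyMeasurable (Function.uncurry fun t w : ℝ =>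
      t ^ (2*(q':ℝ)+1) * (w ^ ((p:ℝ)-1) * Real.exp (-w) * Real.exp (-(1/(4*w)) * t ^ (2:ℝ))))
      ((volume.restrict (Ioi 0)).prod (volume.restrict (Ioi 0))) := by
    apply Measurable.aestronglyMeasurable
    fun_prop
  rw [integrable_prod_iff' hmeas]
  constructor
  · rw [ae_restrict_iff' measurableSet_Ioi]
    refine Filter.Eventually.of_forall (fun w hw => ?_)
    have hw : (0:ℝ) < w := hw
    have h := (gaussian_moment_integrable q' hw).const_mul (w ^ ((p:ℝ)-1) * Real.exp (-w))
    exact h.congr (Filter.Eventually.of_forall fun t => by simp [Function.uncurry]; ring)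
  · have hpos : (0:ℝ) < (p:ℝ) + q' + 1 := by positivity
    have hInt := ((Real.GammaIntegral_convergent hpos).const_mul
      ((4:ℝ) ^ ((q':ℝ)+1) * (1/2) * Real.Gamma ((q':ℝ)+1)))
    refine hInt.congr ?_
    rw [Filter.EventuallyEq, ae_restrict_iff' measurableSet_Ioi]
    refine Filter.Eventually.of_forall (fun w hw => ?_)
    have hw : (0:ℝ) < w := hw
    have h1 : ∫ t, ‖Function.uncurry (fun t w : ℝ =>
        t ^ (2*(q':ℝ)+1) * (w ^ ((p:ℝ)-1) * Real.exp (-w) * Real.exp (-(1/(4*w)) * t ^ (2:ℝ))))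
          (t, w)‖ ∂(volume.restrict (Ioi 0))
        = ∫ t in Ioi (0:ℝ), (w ^ ((p:ℝ)-1) * Real.exp (-w)) *
            (t ^ (2*(q':ℝ)+1) * Real.exp (-(1/(4*w)) * t ^ (2:ℝ))) := by
      refine setIntegral_congr_fun measurableSet_Ioi (fun t ht => ?_)
      have ht : (0:ℝ) < t := ht
      rw [Function.uncurry, Real.norm_eq_abs, abs_of_nonneg (by positivity)]
      ring
    rw [h1, MeasureTheory.integral_const_mul, gaussian_moment q' hw,
      Real.mul_rpow (by norm_num) hw.le]
    rw [show ((p:ℝ)+q'+1) - 1 = ((p:ℝ)-1) + ((q':ℝ)+1) by ring, Real.rpow_add hw]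
    ring

/-- `∫_0^∞ t^(2q+p-1) K_p(t) dt = 2^(p+2q-2) (q-1)! (p+q-1)!`. -/
theorem integral_power_besselK (q p : ℕ) (hq : 1 ≤ q) :
    ∫ t in Ioi (0 : ℝ), t ^ (2 * q + p - 1) * besselK p t =
      2 ^ (p + 2 * q - 2) * (Nat.factorial (q - 1)) * (Nat.factorial (p + q - 1)) := by
  obtain ⟨q', rfl⟩ : ∃ q', q = q' + 1 := ⟨q - 1, by omega⟩
  rw [show 2*(q'+1)+p-1 = 2*q'+p+1 from by omega, show p+2*(q'+1)-2 = p+2*q' from by omega,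
    show (q'+1)-1 = q' from by omega, show p+(q'+1)-1 = p+q' from by omega]
  calc
    ∫ t in Ioi (0:ℝ), t ^ (2*q'+p+1) * besselK p t
        = ∫ t in Ioi (0:ℝ), 2 ^ ((p:ℝ)-1) * ∫ w in Ioi (0:ℝ),
            t ^ (2*(q':ℝ)+1) * (w ^ ((p:ℝ)-1) * Real.exp (-w) *
              Real.exp (-(1/(4*w)) * t ^ (2:ℝ))) :=
      setIntegral_congr_fun measurableSet_Ioi (fun t ht => step1 p q' ht)
    _ = 2 ^ ((p:ℝ)-1) * ∫ t in Ioi (0:ℝ), ∫ w in Ioi (0:ℝ),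
            t ^ (2*(q':ℝ)+1) * (w ^ ((p:ℝ)-1) * Real.exp (-w) *
              Real.exp (-(1/(4*w)) * t ^ (2:ℝ))) := MeasureTheory.integral_const_mul _ _
    _ = 2 ^ ((p:ℝ)-1) * ∫ w in Ioi (0:ℝ), ∫ t in Ioi (0:ℝ),
            t ^ (2*(q':ℝ)+1) * (w ^ ((p:ℝ)-1) * Real.exp (-w) *
              Real.exp (-(1/(4*w)) * t ^ (2:ℝ))) := by
      rw [integral_integral_swap (F_integrable p q')]
    _ = 2 ^ ((p:ℝ)-1) * ∫ w in Ioi (0:ℝ), (w ^ ((p:ℝ)-1) * Real.exp (-w)) *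
          ((4*w) ^ ((q':ℝ)+1) * (1/2) * Real.Gamma ((q':ℝ)+1)) := by
      congr 1
      refine setIntegral_congr_fun measurableSet_Ioi (fun w hw => ?_)
      have hw : (0:ℝ) < w := hw
      rw [show (fun t : ℝ => t ^ (2*(q':ℝ)+1) * (w ^ ((p:ℝ)-1) * Real.exp (-w) *
            Real.exp (-(1/(4*w)) * t ^ (2:ℝ))))
          = fun t : ℝ => (w ^ ((p:ℝ)-1) * Real.exp (-w)) *
            (t ^ (2*(q':ℝ)+1) * Real.exp (-(1/(4*w)) * t ^ (2:ℝ)))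
          from funext fun t => by ring,
        MeasureTheory.integral_const_mul, gaussian_moment q' hw]
    _ = 2 ^ ((p:ℝ)-1) * ((4:ℝ) ^ ((q':ℝ)+1) * (1/2) * Real.Gamma ((q':ℝ)+1) *
          ∫ w in Ioi (0:ℝ), w ^ (((p:ℝ)+q'+1)-1) * Real.exp (-(1*w))) := by
      congr 1
      rw [← MeasureTheory.integral_const_mul]
      refine setIntegral_congr_fun measurableSet_Ioi (fun w hw => ?_)
      have hw : (0:ℝ) < w := hw
      have hww : w ^ (((p:ℝ)+q'+1)-1) = w ^ ((p:ℝ)-1) * w ^ ((q':ℝ)+1) := by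
        rw [← Real.rpow_add hw]; congr 1; ring
      rw [hww, Real.mul_rpow (by norm_num) hw.le, one_mul]
      ring
    _ = 2 ^ ((p:ℝ)-1) * ((4:ℝ) ^ ((q':ℝ)+1) * (1/2) * Real.Gamma ((q':ℝ)+1) *
          Real.Gamma ((p:ℝ)+q'+1)) := by
      rw [integral_rpow_mul_exp_neg_mul_Ioi (by positivity) one_pos]
      norm_num
    _ = 2 ^ (p + 2*q') * (Nat.factorial q') * (Nat.factorial (p + q')) := by
      rw [show (p:ℝ)+(q':ℝ)+1 = ((p+q':ℕ):ℝ)+1 by push_cast; ring,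
        Real.Gamma_nat_eq_factorial, Real.Gamma_nat_eq_factorial,
        show (2:ℝ)^((p:ℝ)-1) = 2^(p:ℕ)/2 from by
          rw [Real.rpow_sub two_pos, Real.rpow_natCast, Real.rpow_one],
        show (q':ℝ)+1 = ((q'+1:ℕ):ℝ) from by push_cast; ring, Real.rpow_natCast,
        show (4:ℝ) = 2^2 from by norm_num]
      ring_nf
      rw [show (4:ℝ) ^ q' = 2 ^ (q' * 2) from by rw [show (4:ℝ) = 2^2 from by norm_num, ← pow_mul, Nat.mul_comm]]
end

section
/- Fix μ ≥ 1 an integer and K > 0. For every integer m > μ there exists κ > K such that e^{−K}(K+1) = (κ+1) (m/(μκ+m))^{m/μ}; that is, the equation (κ+1)(m/(μκ+m))^{m/μ} = e^{−K}(K+1) in κ has a solution κ > K. -/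
open Real

/-- For fixed integer `μ ≥ 1`, `K > 0` and any integer `m > μ`, the equation
`(κ+1)(m/(μκ+m))^(m/μ) = e^{-K}(K+1)` has a solution `κ > K`. -/
theorem exists_kappa_matching_asymptote
    (μ m : ℕ) (hμ : 1 ≤ μ) (hm : μ < m) (K : ℝ) (hK : 0 < K) :
    ∃ κ : ℝ, K < κ ∧
      Real.exp (-K) * (K + 1) =
        (κ + 1) * ((m : ℝ) / ((μ : ℝ) * κ + m)) ^ ((m : ℝ) / μ) := by
  have hμR : (0:ℝ) < μ := by exact_mod_cast Nat.lt_of_lt_of_le Nat.zero_lt_one hμ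
  have hmR : (0:ℝ) < m := by exact_mod_cast Nat.lt_of_le_of_lt (Nat.zero_le μ) hm
  have hmμ : (μ:ℝ) < m := by exact_mod_cast hm
  have hmμ1 : (μ:ℝ) + 1 ≤ m := by exact_mod_cast hm
  set c : ℝ := (m:ℝ) / μ with hc_def
  have hcpos : 0 < c := by positivity
  have hc1 : 1 < c := (one_lt_div hμR).2 hmμ
  set T : ℝ := Real.exp (-K) * (K + 1) with hT_def
  have hTpos : 0 < T := by positivity
  set f : ℝ → ℝ := fun κ => (κ + 1) * ((m : ℝ) / ((μ : ℝ) * κ + m)) ^ c with hf_def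
  -- choose the right endpoint b
  set y : ℝ := T * μ / (2 * m) with hy_def
  have hypos : 0 < y := by positivity
  set D : ℝ := y ^ μ with hD_def
  have hDpos : 0 < D := by positivity
  set b : ℝ := max K ((m:ℝ)/μ + m/(μ*D)) with hb_def
  have hKb : K ≤ b := le_max_left _ _
  have hb2 : (m:ℝ)/μ + m/(μ*D) ≤ b := le_max_right _ _
  have hbmμ : (m:ℝ)/μ ≤ b := le_trans (le_add_of_nonneg_right (by positivity)) hb2
  have hb1 : (1:ℝ) ≤ b := le_trans (le_of_lt ((one_lt_div hμR).2 hmμ)) hbmμ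
  have hbpos : (0:ℝ) < b := lt_of_lt_of_le one_pos hb1
  have hxlt : (m:ℝ)/(μ*b) < D := by
    have h1 : (m:ℝ)/(μ*D) < b :=
      lt_of_lt_of_le (lt_add_of_pos_left _ (by positivity)) hb2
    rw [div_lt_iff₀ (by positivity)]
    have h2 : (m:ℝ)/D < μ * b := by
      calc (m:ℝ)/D = μ * ((m:ℝ)/(μ*D)) := by field_simp
        _ < μ * b := by gcongr
    calc (m:ℝ) = D * ((m:ℝ)/D) := by field_simp
      _ < D * (μ * b) := by gcongr
  have hxle1 : (m:ℝ)/(μ*b) ≤ 1 := by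
    rw [div_le_one (by positivity)]
    calc (m:ℝ) = μ * ((m:ℝ)/μ) := by field_simp
      _ ≤ μ * b := by gcongr
  have hxpos : (0:ℝ) < (m:ℝ)/(μ*b) := by positivity
  -- continuity
  have hcont : ContinuousOn f (Set.Icc K b) := by
    apply ContinuousOn.mul (by fun_prop)
    apply ContinuousOn.rpow_const
    · apply ContinuousOn.div continuousOn_const (by fun_prop)
      intro x hx
      have := hx.1
      nlinarith [hK, hμR, hmR]
    · intro x hx; exact Or.inr hcpos.le
  -- f K > T
  have hfK : T < f K := by
    have hq : 0 < (μ:ℝ) * K / m := by positivity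
    have h1 : (1:ℝ) + μ*K/m < Real.exp (μ*K/m) := by
      have := Real.add_one_lt_exp (x := (μ:ℝ)*K/m) (ne_of_gt hq)
      linarith
    have h2 : ((1:ℝ) + μ*K/m) ^ c < Real.exp K := by
      calc ((1:ℝ) + μ*K/m) ^ c < (Real.exp (μ*K/m)) ^ c :=
            Real.rpow_lt_rpow (by positivity) h1 hcpos
        _ = Real.exp (μ*K/m * c) := (Real.exp_mul _ c).symm
        _ = Real.exp K := by
            congr 1
            rw [hc_def]
            field_simp
    have hbase : (m:ℝ)/(μ*K+m) = ((1:ℝ) + μ*K/m)⁻¹ := by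
      have h3 : (1:ℝ) + μ*K/m = (μ*K+m)/m := by field_simp; ring
      rw [h3, inv_div]
    have hpow_pos : 0 < ((1:ℝ)+μ*K/m)^c := by positivity
    have hexp : Real.exp (-K) < ((m:ℝ)/(μ*K+m)) ^ c := by
      calc Real.exp (-K) = (Real.exp K)⁻¹ := Real.exp_neg K
        _ < (((1:ℝ)+μ*K/m)^c)⁻¹ := by
            exact (inv_lt_inv₀ (by positivity) hpow_pos).2 h2
        _ = (((1:ℝ)+μ*K/m)⁻¹)^c := (Real.inv_rpow (by positivity) c).symm
        _ = ((m:ℝ)/(μ*K+m))^c := by rw [hbase]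
    calc T = Real.exp (-K) * (K+1) := rfl
      _ < ((m:ℝ)/(μ*K+m)) ^ c * (K+1) := by
          apply mul_lt_mul_of_pos_right hexp (by linarith)
      _ = f K := by rw [hf_def]; ring
  -- f b < T
  have hfb : f b < T := by
    set x : ℝ := (m:ℝ)/(μ*b) with hx_def
    have hA : f b ≤ 2*b * x ^ c := by
      have h1 : b + 1 ≤ 2*b := by linarith
      have h2 : ((m:ℝ)/(μ*b+m)) ^ c ≤ x ^ c := by
        apply Real.rpow_le_rpow (by positivity) _ hcpos.le
        rw [hx_def]
        apply div_le_div_of_nonneg_left hmR.le (by positivity)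
        linarith
      have hnn : (0:ℝ) ≤ ((m:ℝ)/(μ*b+m)) ^ c := by positivity
      calc f b = (b+1) * ((m:ℝ)/(μ*b+m)) ^ c := rfl
        _ ≤ 2*b * (x ^ c) := mul_le_mul h1 h2 hnn (by positivity)
    have hB : x ^ c ≤ x * x ^ ((1:ℝ)/μ) := by
      have h1 : (1:ℝ) + 1/μ ≤ c := by
        rw [hc_def, le_div_iff₀ hμR]
        have : ((1:ℝ) + 1/μ) * μ = μ + 1 := by field_simp
        rw [this]
        exact hmμ1
      calc x ^ c ≤ x ^ ((1:ℝ) + 1/μ) :=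
            Real.rpow_le_rpow_of_exponent_ge hxpos hxle1 h1
        _ = x * x ^ ((1:ℝ)/μ) := by
            rw [Real.rpow_add hxpos, Real.rpow_one]
    have hC : x ^ ((1:ℝ)/μ) < y := by
      have h1 : x ^ ((1:ℝ)/μ) < D ^ ((1:ℝ)/μ) :=
        Real.rpow_lt_rpow hxpos.le hxlt (by positivity)
      have h2 : D ^ ((1:ℝ)/μ) = y := by
        rw [hD_def, ← Real.rpow_natCast y μ, ← Real.rpow_mul hypos.le]
        rw [mul_one_div, div_self (ne_of_gt hμR), Real.rpow_one]
      rwa [h2] at h1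
    have h2bx : 2*b*x = 2*m/μ := by
      rw [hx_def]; field_simp
    calc f b ≤ 2*b * x ^ c := hA
      _ ≤ 2*b * (x * x ^ ((1:ℝ)/μ)) := by
          apply mul_le_mul_of_nonneg_left hB (by positivity)
      _ = (2*b*x) * x ^ ((1:ℝ)/μ) := by ring
      _ = (2*m/μ) * x ^ ((1:ℝ)/μ) := by rw [h2bx]
      _ < (2*m/μ) * y := by
          have h2m : (0:ℝ) < 2*m/μ := by positivity
          exact (mul_lt_mul_iff_right₀ h2m).2 hC
      _ = T := by rw [hy_def]; field_simp
  -- IVT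
  obtain ⟨κ, hκmem, hκeq⟩ := intermediate_value_Icc' hKb hcont
    (Set.mem_Icc.2 ⟨hfb.le, hfK.le⟩)
  refine ⟨κ, ?_, ?_⟩
  · rcases lt_or_eq_of_le hκmem.1 with h | h
    · exact h
    · exfalso; rw [← h] at hκeq; rw [hκeq] at hfK; exact lt_irrefl _ hfK
  · exact hκeq.symm
end
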